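/- Let γ > 0, t0 ∈ ℝ, and let V : ℝ → ℝ be differentiable on [t0, ∞) with V(t) ≥ 0 and V'(t) ≤ −γ·√(V(t)) for all t ≥ t0. Then V(t) = 0 for all t ≥ t0 + 2·√(V(t0))/γ. (Finite-time convergence via the comparison principle, used to establish exact recovery of the range rate by the SOSM filter.) -/

import Mathlib

/-- Finite-time convergence via the comparison principle: a nonnegative
differentiable function satisfying `V' ≤ −γ·√V` vanishes after time
`t0 + 2·√(V t0)/γ`. -/
theorem finite_time_convergence
    (γ t0 : ℝ) (hγ : 0 < γ) (V : ℝ → ℝ)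
    (hdiff : DifferentiableOn ℝ V (Set.Ici t0))
    (hnn : ∀ t ≥ t0, 0 ≤ V t)
    (hder : ∀ t ≥ t0, derivWithin V (Set.Ici t0) t ≤ -γ * Real.sqrt (V t)) :
    ∀ t ≥ t0 + 2 * Real.sqrt (V t0) / γ, V t = 0 := by
  set T : ℝ := t0 + 2 * Real.sqrt (V t0) / γ with hT
  have hTt0 : t0 ≤ T := by
    have : 0 ≤ 2 * Real.sqrt (V t0) / γ :=
      div_nonneg (by positivity) hγ.le
    rw [hT]; linarith
  -- deriv V x = derivWithin V (Ici t0) x at interior points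
  have hderiv_eq : ∀ x ∈ Set.Ioi t0, deriv V x = derivWithin V (Set.Ici t0) x := by
    intro x hx
    exact (derivWithin_of_mem_nhds (Ici_mem_nhds hx)).symm
  have hdiffAt : ∀ x ∈ Set.Ioi t0, DifferentiableAt ℝ V x := by
    intro x hx
    exact (hdiff x (show t0 ≤ x from le_of_lt hx)).differentiableAt (Ici_mem_nhds hx)
  -- V is antitone on Ici t0
  have hanti : AntitoneOn V (Set.Ici t0) := by
    apply antitoneOn_of_deriv_nonpos (convex_Ici t0) hdiff.continuousOn
    · rw [interior_Ici]
      exact fun x hx => (hdiffAt x hx).differentiableWithinAt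
    · rw [interior_Ici]
      intro x hx
      rw [hderiv_eq x hx]
      have := hder x (le_of_lt hx)
      have hs : 0 ≤ Real.sqrt (V x) := Real.sqrt_nonneg _
      nlinarith
  -- there exists s in [t0, T] with V s = 0
  have hexists : ∃ s ∈ Set.Icc t0 T, V s = 0 := by
    by_contra h
    push_neg at h
    have hpos : ∀ s ∈ Set.Icc t0 T, 0 < V s := by
      intro s hs
      exact lt_of_le_of_ne (hnn s hs.1) (Ne.symm (h s hs))
    set g : ℝ → ℝ := fun t => Real.sqrt (V t) with hg
    have hgcont : ContinuousOn g (Set.Icc t0 T) :=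
      Real.continuous_sqrt.comp_continuousOn
        ((hdiff.continuousOn).mono (Set.Icc_subset_Ici_self))
    have hgderiv : ∀ x ∈ Set.Ioo t0 T, HasDerivAt g
        (deriv V x / (2 * Real.sqrt (V x))) x := by
      intro x hx
      have hVx : V x ≠ 0 := (hpos x ⟨hx.1.le, hx.2.le⟩).ne'
      have h1 := (Real.hasDerivAt_sqrt hVx).comp x ((hdiffAt x hx.1).hasDerivAt)
      exact h1.congr_deriv (by ring)
    have hgd : DifferentiableOn ℝ g (interior (Set.Icc t0 T)) := by
      rw [interior_Icc]
      exact fun x hx => (hgderiv x hx).differentiableAt.differentiableWithinAt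
    have hgd' : ∀ x ∈ interior (Set.Icc t0 T), deriv g x ≤ -γ / 2 := by
      rw [interior_Icc]
      intro x hx
      rw [(hgderiv x hx).deriv]
      have hVx : 0 < V x := hpos x ⟨hx.1.le, hx.2.le⟩
      have hs : 0 < Real.sqrt (V x) := Real.sqrt_pos.mpr hVx
      have hd : deriv V x ≤ -γ * Real.sqrt (V x) := by
        rw [hderiv_eq x hx.1]; exact hder x hx.1.le
      rw [div_le_div_iff₀ (by positivity) (by norm_num : (0:ℝ) < 2)]
      nlinarith
    have key := (convex_Icc t0 T).image_sub_le_mul_sub_of_deriv_le hgcont hgd hgd'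
      t0 (Set.left_mem_Icc.mpr hTt0) T (Set.right_mem_Icc.mpr hTt0) hTt0
    -- g T - g t0 ≤ -γ/2 * (T - t0) = -√(V t0)
    have hTsub : T - t0 = 2 * Real.sqrt (V t0) / γ := by rw [hT]; ring
    have : Real.sqrt (V T) ≤ 0 := by
      have : -γ / 2 * (T - t0) = -Real.sqrt (V t0) := by
        rw [hTsub]; field_simp
      simp only [hg] at key
      linarith [key, this]
    have hVT : 0 < V T := hpos T ⟨hTt0, le_refl T⟩
    have : 0 < Real.sqrt (V T) := Real.sqrt_pos.mpr hVT
    linarith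
  obtain ⟨s, hs, hVs⟩ := hexists
  intro t ht
  have hst : s ≤ t := le_trans hs.2 ht
  have h1 : V t ≤ V s := hanti hs.1 (le_trans hs.1 hst) hst
  have h2 : 0 ≤ V t := hnn t (le_trans hs.1 hst)
  linarith [hVs ▸ h1]
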